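/- arXiv:2510.21091 — 2 statements merged into one kernel-verified Lean document; each statement's English description precedes it below -/
import Mathlib

section
/- Let n ≥ 1, let y_1,…,y_n ∈ {−1,1} be labels with both W = {i : y_i = 1} and W^c = {i : y_i = −1} nonempty, let f_1,…,f_n be points of ℝ^c, and let G be a set of functions from ℝ^c to ℝ. For g ∈ G define R̃²(g) = 1 − [∑_{i=1}^n (y_i − g(f_i))² − ∑_{i=1}^n (g(f_i) − ȳ)²] / ∑_{i=1}^n (y_i − ȳ)². Then sup_{g∈G} |(1/|W|)∑_{i∈W} g(f_i) − (1/|W^c|)∑_{i∈W^c} g(f_i)| = sup_{g∈G} |R̃²(g)|; indeed, for every g ∈ G the two quantities inside the absolute values are equal. (Theorem 2: the IPM between the empirical distributions of (f_i) on W and on W^c equals the supremum of the modified R².) -/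
open Finset


private lemma ipm_aux (A B Sg Tg Qs Qt : ℝ) (hA : 0 < A) (hB : 0 < B) :
    (1 / A) * Sg - (1 / B) * Tg
      = 1 - ((((A - 2*Sg + Qs) + (B + 2*Tg + Qt))
          - ((Qs - 2*((A-B)/(A+B))*Sg + A*((A-B)/(A+B))^2)
            + (Qt - 2*((A-B)/(A+B))*Tg + B*((A-B)/(A+B))^2)))
        / (4*A*B/(A+B))) := by
  have hAB : A + B ≠ 0 := by positivity
  have hN : ((A - 2*Sg + Qs) + (B + 2*Tg + Qt))
      - ((Qs - 2*((A-B)/(A+B))*Sg + A*((A-B)/(A+B))^2)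
        + (Qt - 2*((A-B)/(A+B))*Tg + B*((A-B)/(A+B))^2))
      = 4*A*B/(A+B) - (4*B*Sg - 4*A*Tg)/(A+B) := by
    field_simp
    ring
  have hA' : A ≠ 0 := ne_of_gt hA
  have hB' : B ≠ 0 := ne_of_gt hB
  rw [hN, div_sub_div_same, div_div_div_cancel_right₀]
  · field_simp
    ring
  · exact hAB

/-- Theorem 2: the empirical IPM between the distributions of `f` on `W` and
on `Wᶜ` equals the supremum of the modified coefficient `R̃²`; moreover the
two quantities inside the absolute values coincide for every discriminator. -/
theorem ipm_eq_sup_Rtilde (n c : ℕ) (hn : 1 ≤ n) (y : Fin n → ℝ)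
    (hy : ∀ i, y i = 1 ∨ y i = -1)
    (hW : (Finset.univ.filter (fun i => y i = 1)).Nonempty)
    (hWc : (Finset.univ.filter (fun i => y i = -1)).Nonempty)
    (f : Fin n → (Fin c → ℝ)) (G : Set ((Fin c → ℝ) → ℝ)) :
    (∀ g ∈ G,
      (1 / ((Finset.univ.filter (fun i => y i = 1)).card : ℝ)) *
          ∑ i ∈ Finset.univ.filter (fun i => y i = 1), g (f i)
        - (1 / ((Finset.univ.filter (fun i => y i = -1)).card : ℝ)) *
          ∑ i ∈ Finset.univ.filter (fun i => y i = -1), g (f i)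
      = 1 - ((∑ i, (y i - g (f i)) ^ 2 - ∑ i, (g (f i) - (∑ j, y j) / n) ^ 2) /
          ∑ i, (y i - (∑ j, y j) / n) ^ 2))
    ∧
    sSup ((fun g : (Fin c → ℝ) → ℝ =>
        |(1 / ((Finset.univ.filter (fun i => y i = 1)).card : ℝ)) *
            ∑ i ∈ Finset.univ.filter (fun i => y i = 1), g (f i)
          - (1 / ((Finset.univ.filter (fun i => y i = -1)).card : ℝ)) *
            ∑ i ∈ Finset.univ.filter (fun i => y i = -1), g (f i)|) '' G)
      = sSup ((fun g : (Fin c → ℝ) → ℝ =>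
          |1 - ((∑ i, (y i - g (f i)) ^ 2
              - ∑ i, (g (f i) - (∑ j, y j) / n) ^ 2) /
            ∑ i, (y i - (∑ j, y j) / n) ^ 2)|) '' G) := by
  classical
  set s := Finset.univ.filter (fun i => y i = 1) with hs
  set t := Finset.univ.filter (fun i => y i = -1) with ht
  have hdisj : Disjoint s t := by
    rw [Finset.disjoint_left]
    intro i hi hit
    rw [hs, Finset.mem_filter] at hi
    rw [ht, Finset.mem_filter] at hit
    rw [hi.2] at hit; norm_num at hit
  have huniv : s ∪ t = Finset.univ := by
    ext i
    simp only [hs, ht, Finset.mem_union, Finset.mem_filter, Finset.mem_univ, true_and]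
    simpa using hy i
  have hsplit : ∀ h : Fin n → ℝ, ∑ i, h i = ∑ i ∈ s, h i + ∑ i ∈ t, h i := by
    intro h; rw [← Finset.sum_union hdisj, huniv]
  have hys : ∀ i ∈ s, y i = 1 := by
    intro i hi; rw [hs, Finset.mem_filter] at hi; exact hi.2
  have hyt : ∀ i ∈ t, y i = -1 := by
    intro i hi; rw [ht, Finset.mem_filter] at hi; exact hi.2
  set A := (s.card : ℝ) with hAdef
  set B := (t.card : ℝ) with hBdef
  have hA : 0 < A := by rw [hAdef]; exact_mod_cast Finset.card_pos.mpr hW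
  have hB : 0 < B := by rw [hBdef]; exact_mod_cast Finset.card_pos.mpr hWc
  have hABn : (n : ℝ) = A + B := by
    rw [hAdef, hBdef]
    have := Finset.card_union_of_disjoint hdisj
    rw [huniv, Finset.card_univ, Fintype.card_fin] at this
    exact_mod_cast this
  have hsumy : ∑ j, y j = A - B := by
    rw [hsplit, Finset.sum_congr rfl hys, Finset.sum_congr rfl hyt]
    simp [hAdef, hBdef, mul_comm, sub_eq_add_neg]
  have key : ∀ g : (Fin c → ℝ) → ℝ,
      (1 / A) * ∑ i ∈ s, g (f i) - (1 / B) * ∑ i ∈ t, g (f i)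
      = 1 - ((∑ i, (y i - g (f i)) ^ 2 - ∑ i, (g (f i) - (∑ j, y j) / n) ^ 2) /
          ∑ i, (y i - (∑ j, y j) / n) ^ 2) := by
    intro g
    set Sg := ∑ i ∈ s, g (f i) with hSg
    set Tg := ∑ i ∈ t, g (f i) with hTg
    set Qs := ∑ i ∈ s, (g (f i))^2 with hQs
    set Qt := ∑ i ∈ t, (g (f i))^2 with hQt
    rw [hsumy, hABn]
    set yb := (A - B) / (A + B) with hyb
    have e1 : ∑ i, (y i - g (f i)) ^ 2 = (A - 2*Sg + Qs) + (B + 2*Tg + Qt) := by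
      rw [hsplit]
      congr 1
      · calc ∑ i ∈ s, (y i - g (f i))^2
            = ∑ i ∈ s, (1 - 2*g (f i) + (g (f i))^2) :=
              Finset.sum_congr rfl (fun i hi => by rw [hys i hi]; ring)
          _ = A - 2*Sg + Qs := by
              rw [Finset.sum_add_distrib, Finset.sum_sub_distrib, Finset.sum_const,
                ← Finset.mul_sum]
              simp [hAdef, hSg, hQs, nsmul_eq_mul]
      · calc ∑ i ∈ t, (y i - g (f i))^2
            = ∑ i ∈ t, (1 + 2*g (f i) + (g (f i))^2) :=
              Finset.sum_congr rfl (fun i hi => by rw [hyt i hi]; ring)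
          _ = B + 2*Tg + Qt := by
              rw [Finset.sum_add_distrib, Finset.sum_add_distrib, Finset.sum_const,
                ← Finset.mul_sum]
              simp [hBdef, hTg, hQt, nsmul_eq_mul]
    have e2 : ∑ i, (g (f i) - yb) ^ 2
        = (Qs - 2*yb*Sg + A*yb^2) + (Qt - 2*yb*Tg + B*yb^2) := by
      rw [hsplit]
      congr 1
      · calc ∑ i ∈ s, (g (f i) - yb)^2
            = ∑ i ∈ s, ((g (f i))^2 - 2*yb*g (f i) + yb^2) :=
              Finset.sum_congr rfl (fun i _ => by ring)
          _ = Qs - 2*yb*Sg + A*yb^2 := by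
              rw [Finset.sum_add_distrib, Finset.sum_sub_distrib, Finset.sum_const,
                ← Finset.mul_sum]
              simp [hAdef, hSg, hQs, nsmul_eq_mul]
      · calc ∑ i ∈ t, (g (f i) - yb)^2
            = ∑ i ∈ t, ((g (f i))^2 - 2*yb*g (f i) + yb^2) :=
              Finset.sum_congr rfl (fun i _ => by ring)
          _ = Qt - 2*yb*Tg + B*yb^2 := by
              rw [Finset.sum_add_distrib, Finset.sum_sub_distrib, Finset.sum_const,
                ← Finset.mul_sum]
              simp [hBdef, hTg, hQt, nsmul_eq_mul]
    have e3 : ∑ i, (y i - yb) ^ 2 = 4*A*B/(A+B) := by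
      have : ∑ i, (y i - yb) ^ 2 = A*(1-yb)^2 + B*(1+yb)^2 := by
        rw [hsplit]
        congr 1
        · calc ∑ i ∈ s, (y i - yb)^2 = ∑ i ∈ s, (1 - yb)^2 :=
              Finset.sum_congr rfl (fun i hi => by rw [hys i hi])
            _ = A*(1-yb)^2 := by rw [Finset.sum_const]; simp [hAdef, nsmul_eq_mul]
        · calc ∑ i ∈ t, (y i - yb)^2 = ∑ i ∈ t, (1 + yb)^2 :=
              Finset.sum_congr rfl (fun i hi => by rw [hyt i hi]; ring)
            _ = B*(1+yb)^2 := by rw [Finset.sum_const]; simp [hBdef, nsmul_eq_mul]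
      rw [this, hyb]
      have hAB : A + B ≠ 0 := by positivity
      field_simp
      ring
    rw [e1, e2, e3, hyb]
    exact ipm_aux A B Sg Tg Qs Qt hA hB
  refine ⟨fun g _ => key g, ?_⟩
  have himg : (fun g : (Fin c → ℝ) → ℝ =>
        |(1 / A) * ∑ i ∈ s, g (f i) - (1 / B) * ∑ i ∈ t, g (f i)|) '' G
      = (fun g : (Fin c → ℝ) → ℝ =>
        |1 - ((∑ i, (y i - g (f i)) ^ 2 - ∑ i, (g (f i) - (∑ j, y j) / n) ^ 2) /
          ∑ i, (y i - (∑ j, y j) / n) ^ 2)|) '' G := by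
    apply Set.image_congr
    intro g _
    rw [key g]
  rw [himg]
end

section
/- Let n, M ≥ 1, let c_1,…,c_n ∈ {−1,1}^M encode membership in M subgroup-subsets W_1,…,W_M, with both W_m = {i : c_{im} = 1} and W_m^c = {i : c_{im} = −1} nonempty for each m ∈ [M]. Let f_1,…,f_n ∈ ℝ^c and let G be a set of functions from ℝ^c to ℝ. Then the empirical supremum IPM is bounded by the doubly regressing quantity: max_{m∈[M]} sup_{g∈G} |(1/|W_m|)∑_{i∈W_m} g(f_i) − (1/|W_m^c|)∑_{i∈W_m^c} g(f_i)| ≤ sup_{g∈G} sup_{v} |DR²(v, g)|, where the inner supremum is over unit vectors v ∈ ℝ^M with ∑_{i=1}^n (⟨v, c_i⟩ − μ_{v,g})² > 0. (Inequality (3): supIPM is bounded by the Doubly Regressing gap.) -/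
open Finset

/-- Inner product `⟨v, cᵢ⟩` of a weight vector with the membership code of
sample `i`. -/
noncomputable def ipc {n M : ℕ} (c : Fin n → Fin M → ℝ) (v : Fin M → ℝ)
    (i : Fin n) : ℝ :=
  ∑ m, v m * c i m

/-- `μ_v = (1/n) ∑ᵢ ⟨v, cᵢ⟩`. -/
noncomputable def muV {n M : ℕ} (c : Fin n → Fin M → ℝ) (v : Fin M → ℝ) : ℝ :=
  (∑ i, ipc c v i) / n

/-- The doubly regressing coefficient `DR²(v, g)` computed with discriminator
values `h i = g (f i)`. -/
noncomputable def DR2 {n M : ℕ} (c : Fin n → Fin M → ℝ) (h : Fin n → ℝ)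
    (v : Fin M → ℝ) : ℝ :=
  1 - ((∑ i, (ipc c v i - h i) ^ 2 - ∑ i, (h i - muV c v) ^ 2) /
      ∑ i, (ipc c v i - muV c v) ^ 2)

/-- The admissible weight vectors: unit Euclidean norm and strictly positive
denominator. -/
noncomputable def admissible {n M : ℕ} (c : Fin n → Fin M → ℝ) :
    Set (Fin M → ℝ) :=
  {v | ∑ m, v m ^ 2 = 1 ∧ 0 < ∑ i, (ipc c v i - muV c v) ^ 2}

lemma sum_sq_aux {n : ℕ} (F : Finset (Fin n)) (a : ℝ) (h : Fin n → ℝ) :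
    ∑ i ∈ F, (a - h i) ^ 2 =
      F.card * a ^ 2 - 2 * a * ∑ i ∈ F, h i + ∑ i ∈ F, h i ^ 2 := by
  rw [Finset.sum_congr rfl (g := fun i => a ^ 2 - 2 * a * h i + h i ^ 2)
      (fun i _ => by ring)]
  rw [Finset.sum_add_distrib, Finset.sum_sub_distrib, Finset.sum_const,
    ← Finset.mul_sum, nsmul_eq_mul]

set_option maxHeartbeats 1000000 in
lemma key {n M : ℕ} (hn : 1 ≤ n) (c : Fin n → Fin M → ℝ) (m : Fin M)
    (hc : ∀ i, c i m = 1 ∨ c i m = -1)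
    (hp : ∃ i, c i m = 1) (hq : ∃ i, c i m = -1) (h : Fin n → ℝ) :
    (fun m' : Fin M => if m' = m then (1:ℝ) else 0) ∈ admissible c ∧
    DR2 c h (fun m' => if m' = m then (1:ℝ) else 0) =
      (1 / ((Finset.univ.filter (fun i => c i m = 1)).card : ℝ)) *
          ∑ i ∈ Finset.univ.filter (fun i => c i m = 1), h i
        - (1 / ((Finset.univ.filter (fun i => c i m = -1)).card : ℝ)) *
          ∑ i ∈ Finset.univ.filter (fun i => c i m = -1), h i := by
  set v : Fin M → ℝ := fun m' => if m' = m then (1:ℝ) else 0 with hv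
  set W := Finset.univ.filter (fun i => c i m = 1) with hWdef
  set Wc := Finset.univ.filter (fun i => c i m = -1) with hWcdef
  have hipc : ∀ i, ipc c v i = c i m := by
    intro i
    simp [ipc, hv, ite_mul]
  have hWc' : Wc = Finset.univ.filter (fun i => ¬ c i m = 1) := by
    apply Finset.filter_congr
    intro i _
    rcases hc i with h' | h' <;> norm_num [h']
  have hsplit : ∀ F : Fin n → ℝ, ∑ i, F i = ∑ i ∈ W, F i + ∑ i ∈ Wc, F i := by
    intro F
    rw [hWc', hWdef, Finset.sum_filter_add_sum_filter_not]
  set p : ℝ := (W.card : ℝ) with hpdef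
  set q : ℝ := (Wc.card : ℝ) with hqdef
  have hcard : W.card + Wc.card = n := by
    rw [hWc', hWdef, Finset.card_filter_add_card_filter_not,
      Finset.card_univ, Fintype.card_fin]
  have hnpq : (n : ℝ) = p + q := by
    rw [hpdef, hqdef]; push_cast [← hcard]; ring
  have hp0 : 0 < p := by
    obtain ⟨i, hi⟩ := hp
    have hiW : i ∈ W := by simp [hWdef, hi]
    rw [hpdef]
    exact_mod_cast Finset.card_pos.mpr ⟨i, hiW⟩
  have hq0 : 0 < q := by
    obtain ⟨i, hi⟩ := hq
    have hiWc : i ∈ Wc := by simp [hWcdef, hi]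
    rw [hqdef]
    exact_mod_cast Finset.card_pos.mpr ⟨i, hiWc⟩
  have hpne : p ≠ 0 := ne_of_gt hp0
  have hqne : q ≠ 0 := ne_of_gt hq0
  have hpq0 : p + q ≠ 0 := by positivity
  have hmemW : ∀ i ∈ W, c i m = 1 := fun i hi => (Finset.mem_filter.mp hi).2
  have hmemWc : ∀ i ∈ Wc, c i m = -1 := fun i hi => (Finset.mem_filter.mp hi).2
  set S := ∑ i ∈ W, h i with hSdef
  set T := ∑ i ∈ Wc, h i with hTdef
  have hmu : muV c v = (p - q) / (p + q) := by
    rw [muV, Finset.sum_congr rfl (fun i _ => hipc i), hsplit (fun i => c i m),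
      Finset.sum_congr rfl hmemW, Finset.sum_congr rfl hmemWc, hnpq]
    simp [← hpdef, ← hqdef]
    ring_nf
  set μ : ℝ := (p - q) / (p + q) with hmudef
  have eW : ∑ i ∈ W, (c i m - μ) ^ 2 = p * (1 - μ) ^ 2 := by
    rw [Finset.sum_congr rfl (g := fun _ => (1 - μ) ^ 2)
        (fun i hi => by rw [hmemW i hi]), Finset.sum_const, nsmul_eq_mul, ← hpdef]
  have eWc : ∑ i ∈ Wc, (c i m - μ) ^ 2 = q * (1 + μ) ^ 2 := by
    rw [Finset.sum_congr rfl (g := fun _ => (1 + μ) ^ 2)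
        (fun i hi => by rw [hmemWc i hi]; ring), Finset.sum_const, nsmul_eq_mul, ← hqdef]
  have hD : ∑ i, (ipc c v i - muV c v) ^ 2 = 4 * p * q / (p + q) := by
    rw [Finset.sum_congr rfl (g := fun i => (c i m - μ) ^ 2)
        (fun i _ => by rw [hipc i, hmu]),
      hsplit (fun i => (c i m - μ) ^ 2), eW, eWc, hmudef]
    field_simp
    ring
  have hDpos : 0 < ∑ i, (ipc c v i - muV c v) ^ 2 := by
    rw [hD]
    have h4 : (0:ℝ) < 4 * p * q := by nlinarith
    exact div_pos h4 (by linarith)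
  constructor
  · refine ⟨?_, hDpos⟩
    have hv2 : ∀ m', v m' ^ 2 = if m' = m then (1:ℝ) else 0 := by
      intro m'
      rw [hv]
      by_cases hmm : m' = m <;> simp [hmm]
    rw [Finset.sum_congr rfl (fun m' _ => hv2 m'), Finset.sum_ite_eq' univ m
      (fun _ => (1:ℝ))]
    simp
  · rw [DR2, hD]
    have eW1 : ∑ i ∈ W, (c i m - h i) ^ 2 = p - 2 * S + ∑ i ∈ W, h i ^ 2 := by
      rw [Finset.sum_congr rfl (g := fun i => (1 - h i) ^ 2)
          (fun i hi => by rw [hmemW i hi]), sum_sq_aux, ← hpdef, ← hSdef]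
      ring
    have eWc1 : ∑ i ∈ Wc, (c i m - h i) ^ 2 = q + 2 * T + ∑ i ∈ Wc, h i ^ 2 := by
      rw [Finset.sum_congr rfl (g := fun i => (-1 - h i) ^ 2)
          (fun i hi => by rw [hmemWc i hi]), sum_sq_aux, ← hqdef, ← hTdef]
      ring
    have hN1 : ∑ i, (ipc c v i - h i) ^ 2 =
        (p - 2 * S + ∑ i ∈ W, h i ^ 2) + (q + 2 * T + ∑ i ∈ Wc, h i ^ 2) := by
      rw [Finset.sum_congr rfl (g := fun i => (c i m - h i) ^ 2)
          (fun i _ => by rw [hipc i]),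
        hsplit (fun i => (c i m - h i) ^ 2), eW1, eWc1]
    have hN2 : ∑ i, (h i - muV c v) ^ 2 =
        (p + q) * μ ^ 2 - 2 * μ * (S + T) + (∑ i ∈ W, h i ^ 2 + ∑ i ∈ Wc, h i ^ 2) := by
      rw [Finset.sum_congr rfl (g := fun i => (μ - h i) ^ 2)
          (fun i _ => by rw [hmu]; ring), sum_sq_aux, Finset.card_univ,
        Fintype.card_fin, hsplit h, hsplit (fun i => h i ^ 2),
        ← hSdef, ← hTdef, hnpq]
    rw [hN1, hN2, hmudef]
    set Q1 := ∑ i ∈ W, h i ^ 2 with hQ1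
    set Q2 := ∑ i ∈ Wc, h i ^ 2 with hQ2
    clear_value S T Q1 Q2 μ p q
    field_simp
    ring

set_option maxHeartbeats 1000000 in
/-- Inequality (3): the empirical supremum IPM over the subgroup-subsets
`W₁, …, W_M` is bounded by the Doubly Regressing gap (suprema taken in
`ℝ≥0∞`). -/
theorem supIPM_le_DR_gap (n M d : ℕ) (hn : 1 ≤ n) (hM : 1 ≤ M)
    (c : Fin n → Fin M → ℝ) (hc : ∀ i m, c i m = 1 ∨ c i m = -1)
    (hpos : ∀ m, ∃ i, c i m = 1) (hneg : ∀ m, ∃ i, c i m = -1)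
    (f : Fin n → (Fin d → ℝ)) (G : Set ((Fin d → ℝ) → ℝ)) :
    (⨆ m : Fin M, ⨆ g ∈ G, ENNReal.ofReal
        |(1 / ((Finset.univ.filter (fun i => c i m = 1)).card : ℝ)) *
            ∑ i ∈ Finset.univ.filter (fun i => c i m = 1), g (f i)
          - (1 / ((Finset.univ.filter (fun i => c i m = -1)).card : ℝ)) *
            ∑ i ∈ Finset.univ.filter (fun i => c i m = -1), g (f i)|)
      ≤ ⨆ g ∈ G, ⨆ v ∈ admissible c,
          ENNReal.ofReal |DR2 c (fun i => g (f i)) v| := by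
  refine iSup_le fun m => iSup_le fun g => iSup_le fun hg => ?_
  obtain ⟨hadm, heq⟩ :=
    key hn c m (fun i => hc i m) (hpos m) (hneg m) (fun i => g (f i))
  rw [← heq]
  refine le_iSup_of_le g (le_iSup_of_le hg ?_)
  refine le_iSup_of_le (fun m' => if m' = m then (1:ℝ) else 0)
    (le_iSup_of_le hadm le_rfl)
end
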